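/- Let n ≥ 1, let A : Fin n → Fin n → Fin n → ℂ, let ε > 0 be real, and let ξ : Matrix (Fin n) (Fin n) ℂ be a nonzero Hermitian positive semidefinite matrix. Define the curvature-type tensor R i j k l := (1/2) · ∑_p A i k p · conj (A j l p) − ε · (if k = j then 1 else 0) · (if i = l then 1 else 0) and the torsion-type tensor T i j p := 2 · A i j p. Then Re (∑_{i,j,k,l} (R i j k l − (1/4) · ∑_p T i k p · conj (T j l p)) · ξ i j · ξ k l) < 0. -/

import Mathlib

open scoped ComplexOrder
set_option maxHeartbeats 1000000

private lemma reorder7 {M : Type*} [AddCommMonoid M] {ι : Type*} [Fintype ι]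
    (f : ι → ι → ι → ι → ι → ι → ι → M) :
    (∑ i, ∑ j, ∑ k, ∑ l, ∑ b, ∑ a, ∑ p, f i j k l b a p)
      = ∑ p, ∑ a, ∑ b, ∑ j, ∑ l, ∑ i, ∑ k, f i j k l b a p := by
  let e : (ι×ι×ι×ι×ι×ι×ι) ≃ (ι×ι×ι×ι×ι×ι×ι) :=
    { toFun := fun y => (y.2.2.2.2.2.1, y.2.2.2.1, y.2.2.2.2.2.2, y.2.2.2.2.1, y.2.2.1, y.2.1, y.1)
      invFun := fun x => (x.2.2.2.2.2.2, x.2.2.2.2.2.1, x.2.2.2.2.1, x.2.1, x.2.2.2.1, x.1, x.2.2.1)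
      left_inv := by rintro ⟨a1,a2,a3,a4,a5,a6,a7⟩; rfl
      right_inv := by rintro ⟨a1,a2,a3,a4,a5,a6,a7⟩; rfl }
  have h1 : (∑ i, ∑ j, ∑ k, ∑ l, ∑ b, ∑ a, ∑ p, f i j k l b a p)
      = ∑ x : ι×ι×ι×ι×ι×ι×ι,
          f x.1 x.2.1 x.2.2.1 x.2.2.2.1 x.2.2.2.2.1 x.2.2.2.2.2.1 x.2.2.2.2.2.2 := by
    simp only [Fintype.sum_prod_type]
  have h2 := Equiv.sum_comp e (fun x : ι×ι×ι×ι×ι×ι×ι =>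
    f x.1 x.2.1 x.2.2.1 x.2.2.2.1 x.2.2.2.2.1 x.2.2.2.2.2.1 x.2.2.2.2.2.2)
  rw [h1, ← h2]
  simp only [Fintype.sum_prod_type, e, Equiv.coe_fn_mk]

private lemma expand_triple {ι : Type*} [Fintype ι] (F G H : ι → ℂ) :
    (∑ p, F p) * (∑ a, G a) * (∑ b, H b) = ∑ b, ∑ a, ∑ p, F p * G a * H b := by
  simp only [Finset.sum_mul, Finset.mul_sum]

open scoped MatrixOrder in
private lemma psd_eq_conjTranspose_mul_self {n : ℕ} {ξ : Matrix (Fin n) (Fin n) ℂ}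
    (hξ : ξ.PosSemidef) : ∃ B : Matrix (Fin n) (Fin n) ℂ, ξ = Matrix.conjTranspose B * B := by
  refine ⟨CFC.sqrt ξ, ?_⟩
  rw [← Matrix.star_eq_conjTranspose, (CFC.sqrt_nonneg ξ).isSelfAdjoint.star_eq,
    CFC.sqrt_mul_sqrt_self ξ hξ.nonneg]

/-- Example 2.2: the metric `g_{kl̄} = δ_k^l + A_{ik}^l z^i + conj(A_{ik}^l z^i)
+ (1/2) A_{ik}^p conj(A_{jl}^p) z^i z̄^j + ε z^l z̄^k` has strictly negative tempered real
bisectional curvature `RBC⁰` at the origin. -/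
theorem example_tempered_RBC_neg (n : ℕ) (hn : 1 ≤ n)
    (A : Fin n → Fin n → Fin n → ℂ) (ε : ℝ) (hε : 0 < ε)
    (ξ : Matrix (Fin n) (Fin n) ℂ) (hξ0 : ξ ≠ 0) (hξ : ξ.PosSemidef)
    (R : Fin n → Fin n → Fin n → Fin n → ℂ)
    (T : Fin n → Fin n → Fin n → ℂ)
    (hR : ∀ i j k l : Fin n,
      R i j k l = (1/2 : ℂ) * ∑ p : Fin n, A i k p * (starRingEnd ℂ) (A j l p)
        - (ε : ℂ) * (if k = j then 1 else 0) * (if i = l then 1 else 0))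
    (hT : ∀ i j p : Fin n, T i j p = 2 * A i j p) :
    (∑ i : Fin n, ∑ j : Fin n, ∑ k : Fin n, ∑ l : Fin n,
      (R i j k l - (1/4 : ℂ) * ∑ p : Fin n, T i k p * (starRingEnd ℂ) (T j l p))
        * ξ i j * ξ k l).re < 0 := by
  obtain ⟨B, hB⟩ := psd_eq_conjTranspose_mul_self hξ
  have hξd : ∀ i j, ξ i j = ∑ a, (starRingEnd ℂ) (B a i) * B a j := by
    intro i j; rw [hB, Matrix.mul_apply]; simp [Matrix.conjTranspose_apply]
  have hherm : ∀ i j, ξ j i = (starRingEnd ℂ) (ξ i j) := fun i j => (hξ.1.apply j i).symm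
  -- the coefficient c
  set c : Fin n → Fin n → Fin n → ℂ := fun p a b =>
    ∑ i, ∑ k, A i k p * (starRingEnd ℂ) (B a i) * (starRingEnd ℂ) (B b k) with hc
  -- Step 1: pointwise simplification of the summand
  have h1 : ∀ i j k l : Fin n,
      (R i j k l - (1/4 : ℂ) * ∑ p : Fin n, T i k p * (starRingEnd ℂ) (T j l p))
          * ξ i j * ξ k l
        = (-(1/2) : ℂ) * ((∑ p, A i k p * (starRingEnd ℂ) (A j l p)) * ξ i j * ξ k l)
          - (ε : ℂ) * ((if k = j then 1 else 0) * ((if i = l then 1 else 0) * (ξ i j * ξ k l))) := by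
    intro i j k l
    have hT4 : (∑ p, T i k p * (starRingEnd ℂ) (T j l p))
        = 4 * ∑ p, A i k p * (starRingEnd ℂ) (A j l p) := by
      rw [Finset.mul_sum]
      refine Finset.sum_congr rfl fun p _ => ?_
      rw [hT, hT, map_mul]
      have : (starRingEnd ℂ) 2 = 2 := map_ofNat _ 2
      rw [this]; ring
    rw [hR i j k l, hT4]; ring
  -- Step 2: the key algebraic identity
  have key : (∑ i : Fin n, ∑ j : Fin n, ∑ k : Fin n, ∑ l : Fin n,
      (R i j k l - (1/4 : ℂ) * ∑ p : Fin n, T i k p * (starRingEnd ℂ) (T j l p))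
        * ξ i j * ξ k l)
      = (-(1/2) : ℂ) * (∑ p, ∑ a, ∑ b, c p a b * (starRingEnd ℂ) (c p a b))
        - (ε : ℂ) * (∑ i, ∑ j, ξ i j * (starRingEnd ℂ) (ξ i j)) := by
    simp only [h1]
    simp only [Finset.sum_sub_distrib, ← Finset.mul_sum]
    congr 1
    · -- quadratic A-part
      congr 1
      have lhs_exp : (∑ i, ∑ j, ∑ k, ∑ l,
          (∑ p, A i k p * (starRingEnd ℂ) (A j l p)) * ξ i j * ξ k l)
          = ∑ i, ∑ j, ∑ k, ∑ l, ∑ b, ∑ a, ∑ p,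
              (A i k p * (starRingEnd ℂ) (A j l p))
                * ((starRingEnd ℂ) (B a i) * B a j)
                * ((starRingEnd ℂ) (B b k) * B b l) := by
        refine Finset.sum_congr rfl fun i _ => Finset.sum_congr rfl fun j _ =>
          Finset.sum_congr rfl fun k _ => Finset.sum_congr rfl fun l _ => ?_
        rw [hξd i j, hξd k l, expand_triple]
      rw [lhs_exp, reorder7]
      refine Finset.sum_congr rfl fun p _ => Finset.sum_congr rfl fun a _ =>
        Finset.sum_congr rfl fun b _ => ?_
      rw [hc]
      simp only [map_sum, map_mul, Complex.conj_conj]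
      simp only [Finset.sum_mul, Finset.mul_sum]
      refine Finset.sum_congr rfl fun j _ => Finset.sum_congr rfl fun l _ =>
        Finset.sum_congr rfl fun i _ => Finset.sum_congr rfl fun k _ => ?_
      ring
    · -- delta part
      congr 1
      refine Finset.sum_congr rfl fun i _ => Finset.sum_congr rfl fun j _ => ?_
      have hsum : (∑ k, (if k = j then (1:ℂ) else 0)
            * ∑ l, (if i = l then (1:ℂ) else 0) * (ξ i j * ξ k l)) = ξ i j * ξ j i := by
        simp
      rw [hsum, hherm i j]
  rw [key]
  -- Step 3: take real parts
  simp only [Complex.mul_conj]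
  push_cast
  rw [show ((-(1/2) : ℂ) * (∑ p, ∑ a, ∑ b, ((Complex.normSq (c p a b) : ℝ) : ℂ))
      - (ε : ℂ) * (∑ i, ∑ j, ((Complex.normSq (ξ i j) : ℝ) : ℂ)))
      = (((-(1/2) * (∑ p, ∑ a, ∑ b, Complex.normSq (c p a b))
          - ε * (∑ i, ∑ j, Complex.normSq (ξ i j)) : ℝ)) : ℂ) by push_cast; ring]
  rw [Complex.ofReal_re]
  have hs : (0:ℝ) ≤ ∑ p, ∑ a, ∑ b, Complex.normSq (c p a b) := by
    refine Finset.sum_nonneg fun p _ => Finset.sum_nonneg fun a _ =>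
      Finset.sum_nonneg fun b _ => Complex.normSq_nonneg _
  have hd : (0:ℝ) < ∑ i, ∑ j, Complex.normSq (ξ i j) := by
    obtain ⟨i, j, hij⟩ : ∃ i j, ξ i j ≠ 0 := by
      by_contra h
      push_neg at h
      exact hξ0 (by ext i j; simpa using h i j)
    have : (0:ℝ) < Complex.normSq (ξ i j) := Complex.normSq_pos.mpr hij
    calc (0:ℝ) < Complex.normSq (ξ i j) := this
      _ ≤ ∑ j', Complex.normSq (ξ i j') :=
          Finset.single_le_sum (fun _ _ => Complex.normSq_nonneg _) (Finset.mem_univ j)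
      _ ≤ ∑ i', ∑ j', Complex.normSq (ξ i' j') :=
          Finset.single_le_sum (fun i' _ => Finset.sum_nonneg fun _ _ => Complex.normSq_nonneg _)
            (Finset.mem_univ i)
  nlinarith
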